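/- arXiv:1402.6603 — 4 statements merged into one kernel-verified Lean document; each statement's English description precedes it below -/
import Mathlib

section
/- Let f be a real polynomial of degree n ≥ 2 all of whose zeros x_1 < x_2 < ⋯ < x_n are real and simple. Suppose a, b : ℝ → ℝ are real-analytic on an open set containing all the zeros x_1, …, x_n, and that f''(x) − 2 a(x) f'(x) + b(x) f(x) = 0 for all x in that open set. Then for every k ∈ {1, …, n}, ∑_{j ≠ k} 1/(x_k − x_j)² = (b(x_k) − a(x_k)² − 2 a'(x_k))/3. -/
open Polynomial Finset

/-- Derivative of a finset product of polynomials. -/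
lemma derivative_finset_prod (s : Finset ℕ) (g : ℕ → Polynomial ℝ) :
    Polynomial.derivative (∏ i ∈ s, g i)
      = ∑ i ∈ s, (∏ j ∈ s.erase i, g j) * Polynomial.derivative (g i) := by
  classical
  induction s using Finset.induction with
  | empty => simp
  | @insert a s ha ih =>
    rw [Finset.prod_insert ha, derivative_mul, ih, Finset.sum_insert ha,
      Finset.erase_insert ha, Finset.mul_sum]
    congr 1
    · ring
    · apply Finset.sum_congr rfl
      intro i hi
      have hai : a ≠ i := by rintro rfl; exact ha hi
      rw [Finset.erase_insert_of_ne hai,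
        Finset.prod_insert (fun h => ha (Finset.mem_of_mem_erase h))]
      ring

/-- **Bethe ansatz equation.**  Let `f` be a real polynomial of degree `n ≥ 2` all of whose zeros
`x_1 < x_2 < ⋯ < x_n` are real and simple.  Suppose `a, b : ℝ → ℝ` are real-analytic on an open
set `s` containing all the zeros, and that `f'' − 2·a·f' + b·f = 0` on `s`.  Then for every
`k ∈ {1, …, n}`,
`∑_{j ≠ k} 1/(x_k − x_j)² = (b(x_k) − a(x_k)² − 2·a'(x_k))/3`. -/
theorem bethe_ansatz (n : ℕ) (hn : 2 ≤ n) (f : Polynomial ℝ) (hf : f ≠ 0)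
    (hdeg : f.natDegree = n) (x : ℕ → ℝ)
    (hmono : ∀ i ∈ Finset.Icc 1 n, ∀ j ∈ Finset.Icc 1 n, i < j → x i < x j)
    (hroot : ∀ i ∈ Finset.Icc 1 n, f.eval (x i) = 0)
    (a b : ℝ → ℝ) (s : Set ℝ) (hs : IsOpen s) (hxs : ∀ i ∈ Finset.Icc 1 n, x i ∈ s)
    (ha : AnalyticOnNhd ℝ a s) (hb : AnalyticOnNhd ℝ b s)
    (hode : ∀ y ∈ s,
      (f.derivative.derivative).eval y - 2 * a y * f.derivative.eval y + b y * f.eval y = 0) :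
    ∀ k ∈ Finset.Icc 1 n,
      ∑ j ∈ (Finset.Icc 1 n).erase k, 1 / (x k - x j) ^ 2
        = (b (x k) - (a (x k)) ^ 2 - 2 * deriv a (x k)) / 3 := by
  classical
  -- injectivity of x on Icc 1 n
  have hinj : ∀ i ∈ Finset.Icc 1 n, ∀ j ∈ Finset.Icc 1 n, x i = x j → i = j := by
    intro i hi j hj hij
    by_contra hne
    rcases Nat.lt_or_ge i j with h | h
    · exact absurd hij (ne_of_lt (hmono i hi j hj h))
    · rcases Nat.lt_or_ge j i with h' | h'
      · exact absurd hij.symm (ne_of_lt (hmono j hj i hi h'))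
      · omega
  -- Step A : f = ∏ (X - C (x i)) * C c
  have hQdvd : (∏ i ∈ Finset.Icc 1 n, (X - C (x i))) ∣ f := by
    have hnd : ((Finset.Icc 1 n).val.map x).Nodup :=
      Multiset.Nodup.map_on hinj (Finset.Icc 1 n).nodup
    have hle : (Finset.Icc 1 n).val.map x ≤ f.roots := by
      rw [Multiset.le_iff_subset hnd]
      intro r hr
      obtain ⟨i, hi, rfl⟩ := Multiset.mem_map.mp hr
      exact (Polynomial.mem_roots hf).mpr (hroot i hi)
    have h1 : ((((Finset.Icc 1 n).val.map x).map fun r => X - C r)).prod ∣ f :=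
      dvd_trans (Multiset.prod_dvd_prod_of_le (Multiset.map_le_map hle))
        (Polynomial.prod_multiset_X_sub_C_dvd f)
    rw [Finset.prod_eq_multiset_prod]
    simpa [Multiset.map_map, Function.comp] using h1
  obtain ⟨q, hq⟩ := hQdvd
  have hQmonic : (∏ i ∈ Finset.Icc 1 n, (X - C (x i))).Monic :=
    monic_prod_of_monic _ _ fun i _ => monic_X_sub_C _
  have hQdeg : (∏ i ∈ Finset.Icc 1 n, (X - C (x i))).natDegree = n := by
    rw [Polynomial.natDegree_prod _ _ (fun i _ => X_sub_C_ne_zero (x i))]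
    simp [Nat.card_Icc]
  have hqne : q ≠ 0 := by rintro rfl; rw [mul_zero] at hq; exact hf hq
  have hqdeg : q.natDegree = 0 := by
    have := Polynomial.natDegree_mul (hQmonic.ne_zero) hqne
    rw [← hq, hdeg, hQdeg] at this
    omega
  have hqC : q = C (q.coeff 0) := Polynomial.eq_C_of_natDegree_eq_zero hqdeg
  set c := q.coeff 0 with hc
  have hcne : c ≠ 0 := by
    rintro h
    rw [hqC, h, map_zero] at hqne
    exact hqne rfl
  intro k hk
  set T := (Finset.Icc 1 n).erase k with hT
  -- g and factorization
  set g : Polynomial ℝ := C c * ∏ j ∈ T, (X - C (x j)) with hg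
  have hfd : f = (X - C (x k)) * g := by
    rw [hq, hqC, hg, ← Finset.mul_prod_erase _ _ hk]
    ring
  -- derivative structure
  have h1 : Polynomial.derivative f
      = g + (X - C (x k)) * Polynomial.derivative g := by
    rw [hfd]
    simp only [derivative_mul, derivative_sub, derivative_X, derivative_C]
    ring
  have h2 : Polynomial.derivative (Polynomial.derivative f)
      = C 2 * Polynomial.derivative g
        + (X - C (x k)) * Polynomial.derivative (Polynomial.derivative g) := by
    rw [h1]
    simp only [derivative_add, derivative_mul, derivative_sub, derivative_X, derivative_C, map_ofNat, derivative_ofNat]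
    ring
  have h3 : Polynomial.derivative (Polynomial.derivative (Polynomial.derivative f))
      = C 3 * Polynomial.derivative (Polynomial.derivative g)
        + (X - C (x k)) * Polynomial.derivative (Polynomial.derivative
            (Polynomial.derivative g)) := by
    rw [h2]
    simp only [derivative_add, derivative_mul, derivative_sub, derivative_X, derivative_C, map_ofNat, derivative_ofNat]
    ring
  have ef1 : (Polynomial.derivative f).eval (x k) = g.eval (x k) := by
    rw [h1]; simp
  have ef2 : (Polynomial.derivative (Polynomial.derivative f)).eval (x k)
      = 2 * (Polynomial.derivative g).eval (x k) := by
    rw [h2]; simp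
  have ef3 : (Polynomial.derivative (Polynomial.derivative (Polynomial.derivative f))).eval (x k)
      = 3 * (Polynomial.derivative (Polynomial.derivative g)).eval (x k) := by
    rw [h3]; simp
  -- values of g and derivatives at x k
  have hene : ∀ j ∈ T, x k - x j ≠ 0 := by
    intro j hj
    have hjI : j ∈ Finset.Icc 1 n := Finset.mem_of_mem_erase hj
    have hjk : j ≠ k := Finset.ne_of_mem_erase hj
    have : x k ≠ x j := fun h => hjk (hinj j hjI k hk h.symm)
    simpa [sub_eq_zero] using this
  have hP0ne : (∏ j ∈ T, (x k - x j)) ≠ 0 := Finset.prod_ne_zero_iff.mpr hene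
  have A0 : g.eval (x k) = c * ∏ j ∈ T, (x k - x j) := by
    simp [hg, Polynomial.eval_prod]
  have hDg : Polynomial.derivative g
      = C c * ∑ i ∈ T, ∏ j ∈ T.erase i, (X - C (x j)) := by
    rw [hg, derivative_mul, derivative_C, zero_mul, zero_add, derivative_finset_prod]
    congr 1
    refine Finset.sum_congr rfl fun i _ => ?_
    rw [derivative_sub, derivative_X, derivative_C, sub_zero, mul_one]
  have key_erase : ∀ i ∈ T, ∏ j ∈ T.erase i, (x k - x j)
      = (∏ j ∈ T, (x k - x j)) * (x k - x i)⁻¹ := by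
    intro i hi
    rw [eq_comm, mul_inv_eq_iff_eq_mul₀ (hene i hi), eq_comm]
    exact Finset.prod_erase_mul _ _ hi
  have A1 : (Polynomial.derivative g).eval (x k)
      = c * ((∏ j ∈ T, (x k - x j)) * ∑ i ∈ T, (x k - x i)⁻¹) := by
    rw [hDg, Polynomial.eval_mul, Polynomial.eval_C, Polynomial.eval_finset_sum]
    have hterm : ∀ i ∈ T, Polynomial.eval (x k) (∏ j ∈ T.erase i, (X - C (x j)))
        = (∏ j ∈ T, (x k - x j)) * (x k - x i)⁻¹ := by
      intro i hi
      rw [Polynomial.eval_prod]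
      simp only [Polynomial.eval_sub, Polynomial.eval_X, Polynomial.eval_C]
      exact key_erase i hi
    rw [Finset.sum_congr rfl hterm, ← Finset.mul_sum]
  have hDDg : Polynomial.derivative (Polynomial.derivative g)
      = C c * ∑ i ∈ T, ∑ l ∈ (T.erase i), ∏ j ∈ (T.erase i).erase l, (X - C (x j)) := by
    rw [hDg, derivative_mul, derivative_C, zero_mul, zero_add, derivative_sum]
    congr 1
    refine Finset.sum_congr rfl fun i _ => ?_
    rw [derivative_finset_prod]
    refine Finset.sum_congr rfl fun l _ => ?_
    rw [derivative_sub, derivative_X, derivative_C, sub_zero, mul_one]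
  have key_erase2 : ∀ i ∈ T, ∀ l ∈ T.erase i, ∏ j ∈ (T.erase i).erase l, (x k - x j)
      = (∏ j ∈ T, (x k - x j)) * (x k - x i)⁻¹ * (x k - x l)⁻¹ := by
    intro i hi l hl
    have hlT : l ∈ T := Finset.mem_of_mem_erase hl
    rw [eq_comm, mul_inv_eq_iff_eq_mul₀ (hene l hlT)]
    rw [Finset.prod_erase_mul _ _ hl]
    exact (key_erase i hi).symm
  have A2 : (Polynomial.derivative (Polynomial.derivative g)).eval (x k)
      = c * ((∏ j ∈ T, (x k - x j))
          * ((∑ i ∈ T, (x k - x i)⁻¹) ^ 2 - ∑ i ∈ T, ((x k - x i)⁻¹) ^ 2)) := by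
    rw [hDDg, Polynomial.eval_mul, Polynomial.eval_C, Polynomial.eval_finset_sum]
    have hterm : ∀ i ∈ T, Polynomial.eval (x k)
          (∑ l ∈ T.erase i, ∏ j ∈ (T.erase i).erase l, (X - C (x j)))
        = (∏ j ∈ T, (x k - x j)) * (x k - x i)⁻¹
            * ((∑ l ∈ T, (x k - x l)⁻¹) - (x k - x i)⁻¹) := by
      intro i hi
      rw [Polynomial.eval_finset_sum]
      have hterm2 : ∀ l ∈ T.erase i, Polynomial.eval (x k)
            (∏ j ∈ (T.erase i).erase l, (X - C (x j)))
          = (∏ j ∈ T, (x k - x j)) * (x k - x i)⁻¹ * (x k - x l)⁻¹ := by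
        intro l hl
        rw [Polynomial.eval_prod]
        simp only [Polynomial.eval_sub, Polynomial.eval_X, Polynomial.eval_C]
        exact key_erase2 i hi l hl
      rw [Finset.sum_congr rfl hterm2, ← Finset.mul_sum, Finset.sum_erase_eq_sub hi]
    rw [Finset.sum_congr rfl hterm]
    have hstep : ∀ i ∈ T, (∏ j ∈ T, (x k - x j)) * (x k - x i)⁻¹
          * ((∑ l ∈ T, (x k - x l)⁻¹) - (x k - x i)⁻¹)
        = (∏ j ∈ T, (x k - x j))
          * ((x k - x i)⁻¹ * (∑ l ∈ T, (x k - x l)⁻¹) - ((x k - x i)⁻¹) ^ 2) :=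
      fun i _ => by ring
    rw [Finset.sum_congr rfl hstep, ← Finset.mul_sum]
    congr 1
    rw [Finset.sum_sub_distrib, ← Finset.sum_mul]
    ring
  -- first equation: the sum of reciprocals equals a (x k)
  have hxks : x k ∈ s := hxs k hk
  have hfk : f.eval (x k) = 0 := hroot k hk
  have E1 : ∑ i ∈ T, (x k - x i)⁻¹ = a (x k) := by
    have h := hode (x k) hxks
    rw [hfk, mul_zero, add_zero, ef1, ef2, A0, A1] at h
    have hfac : c * (∏ j ∈ T, (x k - x j))
        * (2 * ((∑ i ∈ T, (x k - x i)⁻¹) - a (x k))) = 0 := by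
      linear_combination h
    rcases mul_eq_zero.mp hfac with h' | h'
    · exact absurd h' (mul_ne_zero hcne hP0ne)
    · linarith
  -- second equation: differentiate the ODE
  have hda : HasDerivAt a (deriv a (x k)) (x k) :=
    ((ha (x k) hxks).differentiableAt).hasDerivAt
  have hdb : HasDerivAt b (deriv b (x k)) (x k) :=
    ((hb (x k) hxks).differentiableAt).hasDerivAt
  have hder : HasDerivAt (fun y =>
        (Polynomial.derivative (Polynomial.derivative f)).eval y
          - 2 * a y * (Polynomial.derivative f).eval y + b y * f.eval y)
      ((Polynomial.derivative (Polynomial.derivative (Polynomial.derivative f))).eval (x k)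
        - (2 * deriv a (x k) * (Polynomial.derivative f).eval (x k)
            + 2 * a (x k) * (Polynomial.derivative (Polynomial.derivative f)).eval (x k))
        + (deriv b (x k) * f.eval (x k) + b (x k) * (Polynomial.derivative f).eval (x k)))
      (x k) := by
    have H1 := Polynomial.hasDerivAt f (x k)
    have H2 := Polynomial.hasDerivAt (Polynomial.derivative f) (x k)
    have H3 := Polynomial.hasDerivAt (Polynomial.derivative (Polynomial.derivative f)) (x k)
    have := (H3.sub ((hda.const_mul 2).mul H2)).add (hdb.mul H1)
    exact this
  have hzero : deriv (fun y =>
      (Polynomial.derivative (Polynomial.derivative f)).eval y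
        - 2 * a y * (Polynomial.derivative f).eval y + b y * f.eval y) (x k) = 0 := by
    have heq : (fun y =>
        (Polynomial.derivative (Polynomial.derivative f)).eval y
          - 2 * a y * (Polynomial.derivative f).eval y + b y * f.eval y)
        =ᶠ[nhds (x k)] fun _ => (0 : ℝ) := by
      filter_upwards [hs.mem_nhds hxks] with y hy using hode y hy
    rw [heq.deriv_eq]
    simp
  have E2 : (Polynomial.derivative (Polynomial.derivative (Polynomial.derivative f))).eval (x k)
      - (2 * deriv a (x k) * (Polynomial.derivative f).eval (x k)
          + 2 * a (x k) * (Polynomial.derivative (Polynomial.derivative f)).eval (x k))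
      + (deriv b (x k) * f.eval (x k) + b (x k) * (Polynomial.derivative f).eval (x k)) = 0 := by
    rw [← hder.deriv]
    exact hzero
  -- conclude
  rw [ef1, ef2, ef3, hfk, A0, A1, A2, mul_zero, zero_add, E1] at E2
  have hfac : c * (∏ j ∈ T, (x k - x j))
      * (3 * (∑ j ∈ T, 1 / (x k - x j) ^ 2)
          - (b (x k) - a (x k) ^ 2 - 2 * deriv a (x k))) = 0 := by
    have hsq : ∑ j ∈ T, ((x k - x j)⁻¹) ^ 2 = ∑ j ∈ T, 1 / (x k - x j) ^ 2 := by
      refine Finset.sum_congr rfl fun j _ => ?_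
      rw [one_div, inv_pow]
    rw [← hsq]
    linear_combination -E2
  rcases mul_eq_zero.mp hfac with h' | h'
  · exact absurd h' (mul_ne_zero hcne hP0ne)
  · have : ∑ j ∈ T, 1 / (x k - x j) ^ 2
        = (b (x k) - a (x k) ^ 2 - 2 * deriv a (x k)) / 3 := by linarith
    exact this
end

section
/- Let α > −1 be real, n ≥ 2 an integer, and let x_{n,n}(α) < ⋯ < x_{n,1}(α) denote the n zeros of L_n^{(α)} (all real, simple and positive). Set U = √(n+α+1) + √n, V = √(n+α+1) − √n, and Δ(x) = (U² − x)(x − V²)/(4x²). Then for every k ∈ {1, …, n}, ∑_{j ≠ k} 1/(x_{n,k}(α) − x_{n,j}(α))² = (Δ(x_{n,k}(α)) − (α+1)/x_{n,k}(α)²)/3. -/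
/-- The generalized Laguerre polynomial `L_n^{(α)}`, as a function on `ℝ`, defined by
`L_n^{(α)}(x) = ∑_{i=0}^{n} (−1)^i · (∏_{j=i+1}^{n} (α + j)) / ((n − i)! · i!) · x^i`. -/
noncomputable def laguerre (n : ℕ) (α : ℝ) : ℝ → ℝ := fun x =>
  ∑ i ∈ Finset.range (n + 1),
    (-1 : ℝ) ^ i * (∏ j ∈ Finset.Icc (i + 1) n, (α + (j : ℝ))) /
      (((n - i).factorial : ℝ) * ((i.factorial : ℝ))) * x ^ i

open Polynomial Finset

noncomputable def lagC (n : ℕ) (α : ℝ) (i : ℕ) : ℝ :=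
  (-1 : ℝ) ^ i * (∏ j ∈ Finset.Icc (i + 1) n, (α + (j : ℝ))) /
      (((n - i).factorial : ℝ) * ((i.factorial : ℝ)))

noncomputable def lagP (n : ℕ) (α : ℝ) : ℝ[X] :=
  ∑ i ∈ Finset.range (n + 1), C (lagC n α i) * X ^ i

lemma lagP_eval (n : ℕ) (α : ℝ) (y : ℝ) : (lagP n α).eval y = laguerre n α y := by
  simp [lagP, laguerre, lagC, eval_finset_sum]

lemma lagP_coeff (n : ℕ) (α : ℝ) (m : ℕ) :
    (lagP n α).coeff m = if m ≤ n then lagC n α m else 0 := by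
  rw [lagP, finset_sum_coeff]
  simp only [coeff_C_mul, coeff_X_pow, mul_ite, mul_one, mul_zero, Finset.sum_ite_eq,
    Finset.mem_range, Nat.lt_succ_iff]

lemma lagC_rec (n : ℕ) (α : ℝ) (m : ℕ) (h : m < n) :
    ((m : ℝ) + 1) * (α + m + 1) * lagC n α (m + 1) + ((n : ℝ) - m) * lagC n α m = 0 := by
  have hI : Finset.Icc (m + 1) n = insert (m + 1) (Finset.Icc (m + 2) n) :=
    (Finset.insert_Icc_add_one_left_eq_Icc (by omega)).symm
  have hnm : n - m = (n - (m + 1)) + 1 := by omega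
  have hfact : ∀ j : ℕ, ((j.factorial : ℝ)) ≠ 0 := fun j =>
    Nat.cast_ne_zero.mpr (Nat.factorial_ne_zero j)
  unfold lagC
  rw [hI, Finset.prod_insert (by simp), hnm, Nat.factorial_succ (n - (m+1)),
    Nat.factorial_succ m, pow_succ]
  have hc : ((n - (m + 1) : ℕ) : ℝ) = (n : ℝ) - (m : ℝ) - 1 := by
    push_cast [Nat.cast_sub (by omega : m + 1 ≤ n)]; ring
  have hnm0 : (n : ℝ) - (m : ℝ) ≠ 0 := by
    have : (m : ℝ) < n := by exact_mod_cast h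
    linarith
  push_cast [hc]
  have hnm1 : (n:ℝ) - m - 1 + 1 ≠ 0 := by rw [sub_add_cancel]; exact hnm0
  field_simp
  ring

lemma lagP_ode (n : ℕ) (α : ℝ) (hn : 1 ≤ n) :
    X * derivative (derivative (lagP n α)) + (C (α + 1) - X) * derivative (lagP n α)
      + C (n : ℝ) * lagP n α = 0 := by
  ext m
  simp only [coeff_add, coeff_zero, sub_mul, coeff_sub, coeff_C_mul]
  cases m with
  | zero =>
    simp only [coeff_X_mul_zero, coeff_derivative, lagP_coeff, Nat.cast_zero, zero_add, mul_one]
    have h0 : (0:ℕ) < n := hn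
    have := lagC_rec n α 0 h0
    rw [if_pos (by omega : 1 ≤ n), if_pos (by omega : 0 ≤ n)]
    push_cast at this ⊢
    linarith
  | succ m =>
    simp only [coeff_X_mul, coeff_derivative, lagP_coeff]
    push_cast
    rcases lt_trichotomy (m + 1) n with hlt | heq | hgt
    · rw [if_pos (show m + 1 + 1 ≤ n by omega), if_pos (show m + 1 ≤ n by omega)]
      have h1 := lagC_rec n α (m + 1) hlt
      push_cast at h1
      linear_combination h1
    · rw [if_neg (show ¬ (m + 1 + 1 ≤ n) by omega), if_pos (show m + 1 ≤ n by omega)]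
      have hc : ((m:ℝ) + 1) = (n : ℝ) := by exact_mod_cast congrArg (Nat.cast : ℕ → ℝ) heq
      linear_combination (-(lagC n α (m + 1))) * hc
    · rw [if_neg (show ¬ (m + 1 + 1 ≤ n) by omega), if_neg (show ¬ (m + 1 ≤ n) by omega)]
      ring

lemma lagP_ode' (n : ℕ) (α : ℝ) (hn : 1 ≤ n) :
    X * derivative (derivative (derivative (lagP n α)))
      + (C (α + 2) - X) * derivative (derivative (lagP n α))
      + C ((n : ℝ) - 1) * derivative (lagP n α) = 0 := by
  have h := congrArg derivative (lagP_ode n α hn)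
  simp only [derivative_add, derivative_mul, derivative_X, derivative_C, derivative_sub,
    derivative_zero, one_mul, mul_one, zero_sub, zero_mul, add_zero, zero_add, map_add,
    map_mul, map_sub, map_one, derivative_one] at h
  have hC : (C ((n : ℝ) - 1) : ℝ[X]) = C (n : ℝ) - 1 := by
    rw [map_sub, map_one]
  have hC2 : (C (α + 2) : ℝ[X]) = C (α + 1) + 1 := by
    rw [show α + 2 = (α + 1) + 1 by ring, map_add, map_one]
  rw [hC, hC2, show (C (α + 1) : ℝ[X]) = C α + 1 by rw [map_add, map_one]]
  linear_combination h

lemma sum_erase_sq (T : Finset ℕ) (f : ℕ → ℝ) :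
    ∑ j ∈ T, ∑ l ∈ T.erase j, f j * f l = (∑ j ∈ T, f j) ^ 2 - ∑ j ∈ T, (f j) ^ 2 := by
  have h : ∀ j ∈ T, ∑ l ∈ T.erase j, f j * f l = (∑ l ∈ T, f j * f l) - f j * f j := by
    intro j hj
    rw [← Finset.add_sum_erase T (fun l => f j * f l) hj]
    ring
  rw [Finset.sum_congr rfl h, Finset.sum_sub_distrib, sq, Finset.sum_mul_sum]
  simp [sq]


/-- **Bethe ansatz for Laguerre zeros.**  Let `α > −1`, `n ≥ 2`, and let
`x_{n,n}(α) < ⋯ < x_{n,1}(α)` be the `n` zeros of `L_n^{(α)}` (here `x k = x_{n,k}(α)`, listed in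
decreasing order).  With `U = √(n+α+1) + √n`, `V = √(n+α+1) − √n` and
`Δ(t) = (U² − t)(t − V²)/(4t²)`, for every `k ∈ {1, …, n}`,
`∑_{j ≠ k} 1/(x_k − x_j)² = (Δ(x_k) − (α+1)/x_k²)/3`. -/
theorem bethe_ansatz_laguerre (n : ℕ) (hn : 2 ≤ n) (α : ℝ) (hα : -1 < α)
    (x : ℕ → ℝ)
    (hzero : ∀ i ∈ Finset.Icc 1 n, laguerre n α (x i) = 0)
    (hanti : ∀ i ∈ Finset.Icc 1 n, ∀ j ∈ Finset.Icc 1 n, i < j → x j < x i)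
    (hall : ∀ y : ℝ, laguerre n α y = 0 → ∃ i ∈ Finset.Icc 1 n, y = x i)
    (U V : ℝ)
    (hU : U = Real.sqrt (n + α + 1) + Real.sqrt n)
    (hV : V = Real.sqrt (n + α + 1) - Real.sqrt n) :
    ∀ k ∈ Finset.Icc 1 n,
      ∑ j ∈ (Finset.Icc 1 n).erase k, 1 / (x k - x j) ^ 2
        = ((U ^ 2 - x k) * (x k - V ^ 2) / (4 * (x k) ^ 2) - (α + 1) / (x k) ^ 2) / 3 := by
  intro k hk
  classical
  set S : Finset ℕ := Finset.Icc 1 n with hS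
  set T : Finset ℕ := S.erase k with hT
  set t : ℝ := x k with htdef
  set P : ℝ[X] := lagP n α with hPdef
  -- distinctness
  have hxne : ∀ i ∈ S, ∀ j ∈ S, i ≠ j → x i ≠ x j := by
    intro i hi j hj hij
    rcases lt_or_gt_of_ne hij with h | h
    · exact (hanti i hi j hj h).ne'
    · exact (hanti j hj i hi h).ne
  -- roots
  have hroot : ∀ i ∈ S, P.eval (x i) = 0 := fun i hi => by
    rw [lagP_eval]; exact hzero i hi
  -- x k ≠ 0
  have ht0 : t ≠ 0 := by
    intro h0
    have h1 : laguerre n α 0 = 0 := by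
      have h5 := hzero k hk
      rwa [← htdef, h0] at h5
    have h2 : laguerre n α 0 = (∏ j ∈ Finset.Icc 1 n, (α + (j : ℝ))) / ((n.factorial : ℝ)) := by
      unfold laguerre
      rw [Finset.sum_eq_single 0]
      · norm_num
      · intro b _ hb
        simp [zero_pow hb]
      · intro h; simp at h
    have h3 : (0 : ℝ) < ∏ j ∈ Finset.Icc 1 n, (α + (j : ℝ)) := by
      apply Finset.prod_pos
      intro j hj
      have : (1 : ℝ) ≤ (j : ℝ) := by
        exact_mod_cast (Finset.mem_Icc.mp hj).1
      linarith
    rw [h2] at h1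
    have h4 : (0 : ℝ) < (n.factorial : ℝ) := by positivity
    rw [_root_.div_eq_zero_iff] at h1
    rcases h1 with h1 | h1
    · exact h3.ne' h1
    · exact h4.ne' h1
  -- factorization P = C c * nodal S x
  have hcard : S.card = n := by simp [hS]
  have hc0 : lagC n α n ≠ 0 := by
    unfold lagC
    simp only [Finset.Icc_eq_empty_of_lt (by omega : n < n + 1), Finset.prod_empty,
      Nat.sub_self, Nat.factorial_zero]
    have h1 : ((n.factorial : ℝ)) ≠ 0 := Nat.cast_ne_zero.mpr (Nat.factorial_ne_zero n)
    positivity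
  have hPdeg : P.natDegree = n := by
    apply le_antisymm
    · apply Polynomial.natDegree_le_iff_coeff_eq_zero.mpr
      intro m hm
      rw [hPdef, lagP_coeff, if_neg (by omega)]
    · exact Polynomial.le_natDegree_of_ne_zero (by rw [hPdef, lagP_coeff, if_pos le_rfl]; exact hc0)
  have hP0 : P ≠ 0 := fun h => hc0 (by
    have := lagP_coeff n α n
    rw [← hPdef, h] at this
    simpa using this.symm)
  have hdvd : Lagrange.nodal S x ∣ P := by
    rw [Lagrange.nodal_eq]
    apply Finset.prod_dvd_of_coprime
    · intro i hi j hj hij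
      exact Polynomial.isCoprime_X_sub_C_of_isUnit_sub
        (sub_ne_zero_of_ne (hxne i hi j hj hij)).isUnit
    · intro i hi
      exact Polynomial.dvd_iff_isRoot.mpr (hroot i hi)
  obtain ⟨R, hR⟩ := hdvd
  have hnod0 : Lagrange.nodal S x ≠ 0 := Lagrange.nodal_ne_zero
  have hR0 : R ≠ 0 := fun h => hP0 (by rw [hR, h, mul_zero])
  have hRdeg : R.natDegree = 0 := by
    have := Polynomial.natDegree_mul hnod0 hR0
    rw [← hR, hPdeg, Lagrange.natDegree_nodal, hcard] at this
    omega
  obtain ⟨c, hc⟩ := Polynomial.natDegree_eq_zero.mp hRdeg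
  have hfac : P = C c * Lagrange.nodal S x := by rw [hR, ← hc]; ring
  have hcne : c ≠ 0 := fun h => hP0 (by rw [hfac, h, map_zero, zero_mul])
  -- split off the k-th factor
  have hfac2 : P = C c * ((X - C t) * Lagrange.nodal T x) := by
    rw [hfac, Lagrange.nodal_eq_mul_nodal_erase hk]
  set Q1 := Lagrange.nodal T x with hQ1def
  have htne : ∀ j ∈ T, t ≠ x j := fun j hj =>
    hxne k hk j (Finset.mem_of_mem_erase hj) (Finset.ne_of_mem_erase hj).symm
  have hsub : ∀ j ∈ T, t - x j ≠ 0 := fun j hj => sub_ne_zero_of_ne (htne j hj)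
  have hQt0 : eval t Q1 ≠ 0 := Lagrange.eval_nodal_not_at_node htne
  set Qt : ℝ := eval t Q1 with hQtdef
  set f : ℕ → ℝ := fun j => (t - x j)⁻¹ with hfdef
  set s1 : ℝ := ∑ j ∈ T, f j with hs1def
  set s2 : ℝ := ∑ j ∈ T, f j ^ 2 with hs2def
  have hQtprod : Qt = ∏ i ∈ T, (t - x i) := Lagrange.eval_nodal
  have hkey : ∀ j ∈ T, eval t (Lagrange.nodal (T.erase j) x) = Qt * f j := by
    intro j hj
    have h1 : (t - x j) * ∏ i ∈ T.erase j, (t - x i) = ∏ i ∈ T, (t - x i) :=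
      Finset.mul_prod_erase T (fun i => t - x i) hj
    rw [Lagrange.eval_nodal, hQtprod, ← h1, hfdef]
    have := hsub j hj
    field_simp
  have hD1eval : eval t (derivative Q1) = Qt * s1 := by
    rw [hQ1def, Lagrange.derivative_nodal, eval_finset_sum, Finset.sum_congr rfl hkey,
      ← Finset.mul_sum, hs1def]
  have hkey2 : ∀ j ∈ T, eval t (derivative (Lagrange.nodal (T.erase j) x))
      = ∑ l ∈ T.erase j, Qt * (f j * f l) := by
    intro j hj
    rw [Lagrange.derivative_nodal, eval_finset_sum]
    apply Finset.sum_congr rfl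
    intro l hl
    have hlT : l ∈ T := Finset.mem_of_mem_erase hl
    have h1 : (t - x l) * ∏ i ∈ (T.erase j).erase l, (t - x i) = ∏ i ∈ T.erase j, (t - x i) :=
      Finset.mul_prod_erase (T.erase j) (fun i => t - x i) hl
    have h2 : (t - x j) * ∏ i ∈ T.erase j, (t - x i) = ∏ i ∈ T, (t - x i) :=
      Finset.mul_prod_erase T (fun i => t - x i) hj
    rw [Lagrange.eval_nodal, hQtprod, ← h2, ← h1, hfdef]
    have := hsub j hj
    have := hsub l hlT
    field_simp
  have hD2eval : eval t (derivative (derivative Q1)) = Qt * (s1 ^ 2 - s2) := by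
    rw [hQ1def, Lagrange.derivative_nodal, derivative_sum, eval_finset_sum,
      Finset.sum_congr rfl hkey2]
    have hmm : ∑ j ∈ T, ∑ l ∈ T.erase j, Qt * (f j * f l)
        = Qt * ∑ j ∈ T, ∑ l ∈ T.erase j, f j * f l := by
      rw [Finset.mul_sum]
      exact Finset.sum_congr rfl fun j _ => by rw [Finset.mul_sum]
    rw [hmm, sum_erase_sq, hs1def, hs2def]
  -- evaluations of derivatives of P at t
  have hPt : eval t P = 0 := hroot k hk
  have hd1 : derivative P = C c * (Q1 + (X - C t) * derivative Q1) := by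
    rw [hfac2, derivative_C_mul, derivative_mul, derivative_sub, derivative_X, derivative_C]
    ring
  have hd2 : derivative (derivative P)
      = C c * (2 * derivative Q1 + (X - C t) * derivative (derivative Q1)) := by
    rw [hd1, derivative_C_mul, derivative_add, derivative_mul, derivative_sub, derivative_X,
      derivative_C]
    ring
  have hd3 : derivative (derivative (derivative P))
      = C c * (3 * derivative (derivative Q1)
        + (X - C t) * derivative (derivative (derivative Q1))) := by
    rw [hd2]
    simp only [derivative_C_mul, derivative_add, derivative_mul, derivative_sub, derivative_X,
      derivative_C, derivative_ofNat]
    ring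
  have hPty : eval t (derivative P) = c * Qt := by
    rw [hd1]
    simp [hQtdef]
  have hPtyy : eval t (derivative (derivative P)) = c * (2 * (Qt * s1)) := by
    rw [hd2]
    simp [hD1eval]
  have hPtyyy : eval t (derivative (derivative (derivative P)))
      = c * (3 * (Qt * (s1 ^ 2 - s2))) := by
    rw [hd3]
    simp [hD2eval]
  -- the two ODE evaluations
  have hcQ : c * Qt ≠ 0 := mul_ne_zero hcne hQt0
  have E1 := congrArg (eval t) (lagP_ode n α (by omega))
  rw [← hPdef] at E1
  simp only [eval_add, eval_mul, eval_sub, eval_X, eval_C, eval_zero, hPt, hPty, hPtyy,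
    mul_zero, add_zero] at E1
  have e1 : 2 * t * s1 + (α + 1 - t) = 0 := by
    apply mul_left_cancel₀ hcQ
    linear_combination E1
  have E2 := congrArg (eval t) (lagP_ode' n α (by omega))
  rw [← hPdef] at E2
  simp only [eval_add, eval_mul, eval_sub, eval_X, eval_C, eval_zero, hPty, hPtyy, hPtyyy] at E2
  have e2 : 3 * t * (s1 ^ 2 - s2) + 2 * (α + 2 - t) * s1 + ((n : ℝ) - 1) = 0 := by
    apply mul_left_cancel₀ hcQ
    linear_combination E2
  -- translate the goal
  have hgoal : ∑ j ∈ T, 1 / (t - x j) ^ 2 = s2 := by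
    rw [hs2def]
    exact Finset.sum_congr rfl fun j _ => by rw [hfdef]; simp [one_div, inv_pow]
  rw [hgoal]
  -- square roots
  set A := Real.sqrt ((n : ℝ) + α + 1) with hAdef
  set B := Real.sqrt (n : ℝ) with hBdef
  have hnn : (0:ℝ) ≤ (n:ℝ) + α + 1 := by
    have : (0:ℝ) ≤ (n:ℝ) := Nat.cast_nonneg n
    linarith
  have hA : A ^ 2 = (n : ℝ) + α + 1 := Real.sq_sqrt hnn
  have hB : B ^ 2 = (n : ℝ) := Real.sq_sqrt (Nat.cast_nonneg n)
  have hUV1 : U ^ 2 + V ^ 2 = 2 * ((n:ℝ) + α + 1) + 2 * (n:ℝ) := by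
    rw [hU, hV]
    linear_combination 2 * hA + 2 * hB
  have hUV2 : U * V = α + 1 := by
    rw [hU, hV]
    linear_combination hA - hB
  have hexp : (U ^ 2 - t) * (t - V ^ 2) = -t^2 + (U^2 + V^2) * t - (U*V)^2 := by ring
  rw [hexp, hUV1, hUV2]
  have hs1v : 2 * t * s1 = t - α - 1 := by linarith
  have hs1sq : (2 * t * s1) ^ 2 = (t - α - 1) ^ 2 := by rw [hs1v]
  have h12 : 12 * t ^ 2 * s2 = -t ^ 2 + (4 * (n:ℝ) + 2 * α + 2) * t - (α + 1) * (α + 5) := by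
    linear_combination (-4 * t) * e2 + 3 * hs1sq + (4 * (α + 2 - t)) * hs1v
  field_simp
  linear_combination h12
end

section
/- Let α > −1 be real, n ≥ 1 an integer, and set U = √(n+α+1) + √n and V = √(n+α+1) − √n. Then every zero x of the generalized Laguerre polynomial L_n^{(α)} satisfies V² < x < U²; in particular V² < x_{n,n}(α) and x_{n,1}(α) < U², where x_{n,n}(α) and x_{n,1}(α) denote the smallest and largest zero respectively. -/
private noncomputable def Pprod (α : ℝ) (i k : ℕ) : ℝ := ∏ j ∈ Finset.Icc (i+1) k, (α + (j:ℝ))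

private noncomputable def Cc (α : ℝ) (k i : ℕ) : ℝ := (-1:ℝ)^i * (k.choose i : ℝ) * Pprod α i k

private lemma Ptop (α : ℝ) (i k : ℕ) (h : i ≤ k) : Pprod α i (k+1) = Pprod α i k * (α + (k+1)) := by
  unfold Pprod; rw [Finset.prod_Icc_succ_top (by omega)]; push_cast; ring

private lemma Pbot (α : ℝ) (i k : ℕ) (h : i + 1 ≤ k) :
    Pprod α i k = (α + (i+1)) * Pprod α (i+1) k := by
  unfold Pprod
  rw [← Finset.Ico_add_one_right_eq_Icc, Finset.prod_eq_prod_Ico_succ_bot (by omega), Finset.Ico_add_one_right_eq_Icc]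
  push_cast; ring

private lemma Pself (α : ℝ) (k : ℕ) : Pprod α k k = 1 := by
  unfold Pprod; rw [Finset.Icc_eq_empty (by omega)]; simp

private lemma Psucc (α : ℝ) (k : ℕ) : Pprod α k (k+1) = α + (k+1) := by
  unfold Pprod; rw [Finset.Icc_self]; simp

private lemma lag_eq (α x : ℝ) (k N : ℕ) (h : k < N) :
    (k.factorial : ℝ) * laguerre k α x = ∑ i ∈ Finset.range N, Cc α k i * x ^ i := by
  have h1 : ∑ i ∈ Finset.range N, Cc α k i * x ^ i
      = ∑ i ∈ Finset.range (k+1), Cc α k i * x ^ i := by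
    refine (Finset.sum_subset (Finset.range_subset_range.2 h) ?_).symm
    intro i _ hi
    have hki : k < i := by
      by_contra hc
      exact hi (Finset.mem_range.2 (Nat.lt_succ_of_le (le_of_not_gt hc)))
    simp [Cc, Nat.choose_eq_zero_of_lt hki]
  rw [h1, laguerre, Finset.mul_sum]
  refine Finset.sum_congr rfl ?_
  intro i hi
  have hik : i ≤ k := Nat.lt_succ_iff.1 (Finset.mem_range.1 hi)
  have hch : ((k.choose i : ℕ) : ℝ) * (i.factorial : ℝ) * ((k-i).factorial : ℝ)
      = (k.factorial : ℝ) := by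
    exact_mod_cast congrArg (fun t : ℕ => (t : ℝ)) (Nat.choose_mul_factorial_mul_factorial hik)
  unfold Cc Pprod
  have hf1 : ((k-i).factorial : ℝ) ≠ 0 := Nat.cast_ne_zero.2 (Nat.factorial_ne_zero _)
  have hf2 : ((i).factorial : ℝ) ≠ 0 := Nat.cast_ne_zero.2 (Nat.factorial_ne_zero _)
  field_simp
  linear_combination (-(∏ j ∈ Finset.Icc (i+1) k, (α + (j:ℝ))) * x ^ i) * hch

private lemma coef_id (α : ℝ) (m i : ℕ) :
    Cc α (m+2) i = (2*((m:ℝ)+1)+α+1) * Cc α (m+1) i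
      - (if i = 0 then 0 else Cc α (m+1) (i-1))
      - ((m+1)*((m:ℝ)+1+α)) * Cc α m i := by
  match i with
  | 0 =>
    simp only [if_pos rfl, Cc, pow_zero, Nat.choose_zero_right, Nat.cast_one, one_mul]
    have h1 : Pprod α 0 (m+2) = Pprod α 0 m * (α + (m+1)) * (α + (m+2)) := by
      rw [show m+2 = (m+1)+1 from rfl, Ptop α 0 (m+1) (by omega), Ptop α 0 m (by omega)]
      push_cast; ring
    have h2 : Pprod α 0 (m+1) = Pprod α 0 m * (α + (m+1)) := Ptop α 0 m (by omega)
    rw [h1, h2]; push_cast; ring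
  | j+1 =>
    simp only [if_neg (Nat.succ_ne_zero j), Nat.add_sub_cancel]
    rcases lt_or_ge (j+1) (m+1) with hj | hj
    · have hjm : j + 1 ≤ m := by omega
      have h1 : Pprod α (j+1) (m+2) = Pprod α (j+1) m * (α + (m+1)) * (α + (m+2)) := by
        rw [show m+2 = (m+1)+1 from rfl, Ptop α (j+1) (m+1) (by omega), Ptop α (j+1) m (by omega)]
        push_cast; ring
      have h2 : Pprod α (j+1) (m+1) = Pprod α (j+1) m * (α + (m+1)) := Ptop α (j+1) m (by omega)
      have h3 : Pprod α j (m+1) = (α + (j+1)) * (Pprod α (j+1) m * (α + (m+1))) := by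
        rw [Pbot α j (m+1) (by omega), h2]
      have pascal1 : (((m+2).choose (j+1) : ℕ) : ℝ)
          = ((m+1).choose j : ℕ) + ((m+1).choose (j+1) : ℕ) := by
        exact_mod_cast congrArg (fun t : ℕ => (t:ℝ)) (Nat.choose_succ_succ (m+1) j)
      have pascal2 : (((m+1).choose (j+1) : ℕ) : ℝ)
          = (m.choose j : ℕ) + (m.choose (j+1) : ℕ) := by
        exact_mod_cast congrArg (fun t : ℕ => (t:ℝ)) (Nat.choose_succ_succ m j)
      have absorb : ((m:ℝ)+1-j) * ((m+1).choose j : ℕ) = ((m:ℝ)+1) * (m.choose j : ℕ) := by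
        have h := Nat.choose_mul_succ_eq m j
        have hjle : j ≤ m + 1 := by omega
        have h' : ((m.choose j * (m+1) : ℕ) : ℝ) = (((m+1).choose j * (m+1-j) : ℕ) : ℝ) := by
          exact_mod_cast congrArg (fun t : ℕ => (t:ℝ)) h
        push_cast [Nat.cast_sub hjle] at h'
        linarith
      simp only [Cc, h1, h2, h3, pascal1, pascal2, pow_succ]
      push_cast
      linear_combination (-(-1:ℝ)^j * Pprod α (j+1) m * (α + (m+1))) * absorb
    · rcases Nat.lt_or_ge (j+1) (m+2) with hj2 | hj2
      · have hje : j = m := by omega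
        subst hje
        have e1 : Pprod α (j+1) (j+2) = α + (j:ℝ) + 2 := by
          have h := Psucc α (j+1)
          rw [show (j+1)+1 = j+2 from rfl] at h
          rw [h]; push_cast; ring
        simp only [Cc, Nat.choose_succ_self_right, Nat.choose_self,
          Nat.choose_eq_zero_of_lt (by omega : j < j+1), Psucc, Pself, e1,
          Nat.cast_zero, mul_zero, zero_mul, Nat.cast_one, mul_one]
        push_cast [pow_succ]
        ring
      · rcases Nat.lt_or_ge (j+1) (m+3) with hj3 | hj3
        · have hje : j = m+1 := by omega
          subst hje
          simp only [Cc, Nat.choose_self, Nat.choose_eq_zero_of_lt (by omega : m+1 < m+2),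
            Nat.choose_eq_zero_of_lt (by omega : m < m+2), Pself]
          push_cast [pow_succ]
          ring
        · have c1 : (m+2).choose (j+1) = 0 := Nat.choose_eq_zero_of_lt (by omega)
          have c2 : (m+1).choose (j+1) = 0 := Nat.choose_eq_zero_of_lt (by omega)
          have c3 : (m+1).choose j = 0 := Nat.choose_eq_zero_of_lt (by omega)
          have c4 : m.choose (j+1) = 0 := Nat.choose_eq_zero_of_lt (by omega)
          simp [Cc, c1, c2, c3, c4]

private lemma Qrec (α x : ℝ) (m : ℕ) :
    (((m+2).factorial : ℝ)) * laguerre (m+2) α x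
      = (2*((m:ℝ)+1)+α+1-x) * (((m+1).factorial : ℝ) * laguerre (m+1) α x)
        - ((m+1)*((m:ℝ)+1+α)) * ((m.factorial : ℝ) * laguerre m α x) := by
  rw [lag_eq α x (m+2) (m+4) (by omega), lag_eq α x (m+1) (m+4) (by omega),
    lag_eq α x m (m+4) (by omega)]
  have hshift : x * ∑ i ∈ Finset.range (m+4), Cc α (m+1) i * x ^ i
      = ∑ i ∈ Finset.range (m+4), (if i = 0 then 0 else Cc α (m+1) (i-1)) * x ^ i := by
    rw [Finset.sum_range_succ' (fun i => (if i = 0 then 0 else Cc α (m+1) (i-1)) * x ^ i) (m+3)]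
    simp only [ite_true, ite_false, eq_self_iff_true, Nat.succ_ne_zero, if_true, if_false,
      zero_mul, add_zero, Nat.add_sub_cancel, if_neg (Nat.succ_ne_zero 0)]
    rw [Finset.mul_sum, Finset.sum_range_succ (fun i => x * (Cc α (m+1) i * x ^ i)) (m+3)]
    have : Cc α (m+1) (m+3) = 0 := by
      simp [Cc, Nat.choose_eq_zero_of_lt (by omega : m+1 < m+3)]
    rw [this]
    simp only [zero_mul, mul_zero, add_zero]
    exact Finset.sum_congr rfl (fun i _ => by ring)
  have expand : (2*((m:ℝ)+1)+α+1-x) * (∑ i ∈ Finset.range (m+4), Cc α (m+1) i * x ^ i)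
      = (2*((m:ℝ)+1)+α+1) * (∑ i ∈ Finset.range (m+4), Cc α (m+1) i * x ^ i)
        - x * ∑ i ∈ Finset.range (m+4), Cc α (m+1) i * x ^ i := by ring
  rw [expand, hshift, Finset.mul_sum, Finset.mul_sum, ← Finset.sum_sub_distrib,
    ← Finset.sum_sub_distrib]
  refine Finset.sum_congr rfl (fun i _ => ?_)
  linear_combination (x ^ i) * (coef_id α m i)

private lemma lag0 (α x : ℝ) : laguerre 0 α x = 1 := by simp [laguerre]

private lemma lag1 (α x : ℝ) : laguerre 1 α x = α + 1 - x := by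
  simp [laguerre, Finset.sum_range_succ]
  ring

private lemma ratio_pos (α c : ℝ) (hc : 0 < c) (n : ℕ) (hn : 1 ≤ n) (F γ : ℕ → ℝ)
    (hF0 : F 0 = 1) (hF1 : F 1 = γ 0)
    (hrec : ∀ k : ℕ, 1 ≤ k → k + 1 ≤ n →
      F (k+1) = (γ k + k*c) * F k - (k*((k:ℝ)+α)) * F (k-1))
    (hkey : ∀ k : ℕ, 1 ≤ k → k ≤ n → (k:ℝ)+α ≤ c * γ (k-1))
    (hca : ∀ k : ℕ, 1 ≤ k → k ≤ n → 0 < (k:ℝ)+α) :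
    0 < F n := by
  have H : ∀ k : ℕ, k + 1 ≤ n → γ k * F k ≤ F (k+1) ∧ 0 < F k := by
    intro k
    induction k with
    | zero => intro _; rw [hF0, hF1]; exact ⟨le_of_eq (mul_one _), one_pos⟩
    | succ k ih =>
      intro h
      obtain ⟨h1, h2⟩ := ih (by omega)
      have hγk : ((k:ℝ)+1)+α ≤ c * γ k := by
        have := hkey (k+1) (by omega) (by omega)
        simpa using this
      have hcapos : 0 < ((k:ℝ)+1)+α := by
        have := hca (k+1) (by omega) (by omega); simpa using this
      have hγpos : 0 < γ k := by nlinarith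
      have hFk1 : 0 < F (k+1) := lt_of_lt_of_le (mul_pos hγpos h2) h1
      constructor
      · have hr := hrec (k+1) (by omega) (by omega)
        simp only [Nat.add_sub_cancel] at hr
        rw [hr]
        push_cast
        have e1 : (((k:ℝ)+1)+α) * F k ≤ c * (γ k * F k) :=
          by nlinarith [mul_le_mul_of_nonneg_right hγk h2.le]
        have e2 : c * (γ k * F k) ≤ c * F (k+1) := mul_le_mul_of_nonneg_left h1 hc.le
        nlinarith [mul_le_mul_of_nonneg_left (le_trans e1 e2) (by positivity : (0:ℝ) ≤ (k:ℝ)+1)]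
      · exact hFk1
  obtain ⟨m, rfl⟩ : ∃ m, n = m + 1 := ⟨n - 1, by omega⟩
  obtain ⟨h1, h2⟩ := H m (le_refl _)
  have hγk : ((m:ℝ)+1)+α ≤ c * γ m := by
    have := hkey (m+1) (by omega) (le_refl _); simpa using this
  have hcapos : 0 < ((m:ℝ)+1)+α := by
    have := hca (m+1) (by omega) (le_refl _); simpa using this
  have hγpos : 0 < γ m := by nlinarith
  exact lt_of_lt_of_le (mul_pos hγpos h2) h1

private lemma lag_pos_low (n : ℕ) (hn : 1 ≤ n) (α : ℝ) (hα : -1 < α) (y : ℝ)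
    (hy : y ≤ (Real.sqrt ((n:ℝ) + α + 1) - Real.sqrt (n:ℝ))^2) : 0 < laguerre n α y := by
  set A := Real.sqrt ((n:ℝ) + α + 1) with hAdef
  set B := Real.sqrt (n:ℝ) with hBdef
  have hn1 : (1:ℝ) ≤ (n:ℝ) := by exact_mod_cast hn
  have hA2 : A^2 = (n:ℝ) + α + 1 := Real.sq_sqrt (by linarith)
  have hB2 : B^2 = (n:ℝ) := Real.sq_sqrt (by linarith)
  have hB : 0 < B := Real.sqrt_pos.2 (by linarith)
  have hA : 0 < A := Real.sqrt_pos.2 (by linarith)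
  have hα' : α = A^2 - B^2 - 1 := by rw [hA2, hB2]; ring
  have key := ratio_pos α (A/B) (div_pos hA hB) n hn
    (fun k => (k.factorial : ℝ) * laguerre k α y)
    (fun k => ((k:ℝ)+α+1) - k*(A/B - 1) - y)
    (by simp [lag0])
    (by simp [lag1]; try ring)
    ?_ ?_ ?_
  · by_contra h
    push_neg at h
    have hfact : (0:ℝ) < (n.factorial : ℝ) := by exact_mod_cast Nat.factorial_pos n
    have key' : 0 < (n.factorial : ℝ) * laguerre n α y := key
    nlinarith [key', mul_nonpos_of_nonneg_of_nonpos hfact.le h]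
  · -- hrec
    intro k hk1 hkn
    obtain ⟨m, rfl⟩ : ∃ m, k = m + 1 := ⟨k - 1, by omega⟩
    simp only [Nat.add_sub_cancel]
    push_cast
    linear_combination Qrec α y m
  · -- hkey
    intro k hk1 hkn
    obtain ⟨j, rfl⟩ : ∃ m, k = m + 1 := ⟨k - 1, by omega⟩
    simp only [Nat.add_sub_cancel]
    push_cast
    have hjn : (j:ℝ) + 1 ≤ B^2 := by rw [hB2]; exact_mod_cast hkn
    rw [div_mul_eq_mul_div, le_div_iff₀ hB, ← mul_le_mul_iff_of_pos_right hB]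
    have hdm : A/B*B = A := div_mul_cancel₀ A hB.ne'
    have harr : A * ((j:ℝ)+α+1 - j*(A/B - 1) - y) * B
        = A * (B*((j:ℝ)+α+1) - j*(A-B) - B*y) := by
      linear_combination (-(A * (j:ℝ))) * hdm
    rw [harr, hα']
    nlinarith [mul_nonneg (mul_pos hA hB).le (sub_nonneg.2 hy),
      mul_nonneg (by linarith : (0:ℝ) ≤ B^2 - (j:ℝ)) (sq_nonneg (A-B))]
  · -- hca
    intro k hk1 _
    have : (1:ℝ) ≤ (k:ℝ) := by exact_mod_cast hk1
    linarith

private lemma lag_pos_high (n : ℕ) (hn : 1 ≤ n) (α : ℝ) (hα : -1 < α) (y : ℝ)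
    (hy : (Real.sqrt ((n:ℝ) + α + 1) + Real.sqrt (n:ℝ))^2 ≤ y) :
    0 < (-1:ℝ)^n * laguerre n α y := by
  set A := Real.sqrt ((n:ℝ) + α + 1) with hAdef
  set B := Real.sqrt (n:ℝ) with hBdef
  have hn1 : (1:ℝ) ≤ (n:ℝ) := by exact_mod_cast hn
  have hA2 : A^2 = (n:ℝ) + α + 1 := Real.sq_sqrt (by linarith)
  have hB2 : B^2 = (n:ℝ) := Real.sq_sqrt (by linarith)
  have hB : 0 < B := Real.sqrt_pos.2 (by linarith)
  have hA : 0 < A := Real.sqrt_pos.2 (by linarith)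
  have hα' : α = A^2 - B^2 - 1 := by rw [hA2, hB2]; ring
  have key := ratio_pos α (A/B) (div_pos hA hB) n hn
    (fun k => (-1:ℝ)^k * ((k.factorial : ℝ) * laguerre k α y))
    (fun k => y - (2*(k:ℝ)+α+1) - k*(A/B))
    (by simp [lag0])
    (by simp [lag1]; try ring)
    ?_ ?_ ?_
  · by_contra h
    push_neg at h
    have hfact : (0:ℝ) < (n.factorial : ℝ) := by exact_mod_cast Nat.factorial_pos n
    have key' : 0 < (-1:ℝ)^n * ((n.factorial : ℝ) * laguerre n α y) := key
    nlinarith [key', mul_nonpos_of_nonneg_of_nonpos hfact.le h]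
  · -- hrec
    intro k hk1 hkn
    obtain ⟨m, rfl⟩ : ∃ m, k = m + 1 := ⟨k - 1, by omega⟩
    simp only [Nat.add_sub_cancel]
    push_cast
    simp only [pow_succ]
    linear_combination ((-1:ℝ)^m) * (Qrec α y m)
  · -- hkey
    intro k hk1 hkn
    obtain ⟨j, rfl⟩ : ∃ m, k = m + 1 := ⟨k - 1, by omega⟩
    simp only [Nat.add_sub_cancel]
    push_cast
    have hjn : (j:ℝ) + 1 ≤ B^2 := by rw [hB2]; exact_mod_cast hkn
    rw [div_mul_eq_mul_div, le_div_iff₀ hB, ← mul_le_mul_iff_of_pos_right hB]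
    have hdm : A/B*B = A := div_mul_cancel₀ A hB.ne'
    have harr : A * (y - (2*(j:ℝ)+α+1) - j*(A/B)) * B
        = A * (B*y - B*(2*(j:ℝ)+α+1) - j*A) := by
      linear_combination (-(A * (j:ℝ))) * hdm
    rw [harr, hα']
    nlinarith [mul_nonneg (mul_pos hA hB).le (sub_nonneg.2 hy),
      mul_nonneg (by linarith : (0:ℝ) ≤ B^2 - (j:ℝ)) (sq_nonneg (A+B))]
  · -- hca
    intro k hk1 _
    have : (1:ℝ) ≤ (k:ℝ) := by exact_mod_cast hk1
    linarith

/-- Let `α > −1`, `n ≥ 1`, `U = √(n+α+1) + √n`, `V = √(n+α+1) − √n`.  Then every zero `y` of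
the generalized Laguerre polynomial `L_n^{(α)}` satisfies `V² < y < U²`; in particular this
holds for the smallest zero `x_{n,n}(α)` and the largest zero `x_{n,1}(α)`. -/
theorem laguerre_zeros_bounds (n : ℕ) (hn : 1 ≤ n) (α : ℝ) (hα : -1 < α)
    (U V : ℝ)
    (hU : U = Real.sqrt (n + α + 1) + Real.sqrt n)
    (hV : V = Real.sqrt (n + α + 1) - Real.sqrt n) :
    ∀ y : ℝ, laguerre n α y = 0 → V ^ 2 < y ∧ y < U ^ 2 := by
  intro y hy0
  constructor
  · by_contra h
    push_neg at h
    have hpos := lag_pos_low n hn α hα y (by rw [hV] at h; exact_mod_cast h)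
    rw [hy0] at hpos
    exact lt_irrefl 0 hpos
  · by_contra h
    push_neg at h
    have hpos := lag_pos_high n hn α hα y (by rw [hU] at h; exact_mod_cast h)
    rw [hy0] at hpos
    simp at hpos
end

section
/- Let C > 0 be real, n ≥ 2 an integer, and α > −1 a real number with α ≥ n/C. Let x_{n,n}(α) < ⋯ < x_{n,1}(α) denote the n zeros of the generalized Laguerre polynomial L_n^{(α)}. Then for every k ∈ {1, …, n−1}, x_{n,k}(α) − x_{n,k+1}(α) ≥ √(3/(2(C+1))) · √(α/n). -/
namespace LagAux

open Polynomial Finset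

variable (n : ℕ) (α : ℝ)

noncomputable def a (n : ℕ) (α : ℝ) (i : ℕ) : ℝ :=
  (-1 : ℝ) ^ i * (∏ j ∈ Finset.Icc (i + 1) n, (α + (j : ℝ))) /
      (((n - i).factorial : ℝ) * ((i.factorial : ℝ)))

noncomputable def P (n : ℕ) (α : ℝ) : Polynomial ℝ :=
  ∑ i ∈ Finset.range (n + 1), C (a n α i) * X ^ i

lemma evalP (n : ℕ) (α : ℝ) (y : ℝ) : (P n α).eval y = laguerre n α y := by
  simp [P, laguerre, a, eval_finset_sum]

lemma coeffP (n : ℕ) (α : ℝ) (m : ℕ) :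
    (P n α).coeff m = if m ≤ n then a n α m else 0 := by
  simp only [P, finset_sum_coeff, coeff_C_mul, coeff_X_pow, mul_ite, mul_one, mul_zero]
  rw [Finset.sum_ite_eq (Finset.range (n+1)) m (fun i => a n α i)]
  simp [Nat.lt_succ_iff]

lemma a_rec (n : ℕ) (α : ℝ) {i : ℕ} (h : i < n) :
    ((i : ℝ) + 1) * (α + i + 1) * a n α (i + 1) = ((i : ℝ) - n) * a n α i := by
  have h1 : i + 1 ≤ n := h
  have hins : Finset.Icc (i+1) n = insert (i+1) (Finset.Icc (i+2) n) :=
    (Finset.insert_Icc_add_one_left_eq_Icc h1).symm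
  have hnotmem : i + 1 ∉ Finset.Icc (i+2) n := by simp
  have hprod : (∏ j ∈ Finset.Icc (i+1) n, (α + (j:ℝ)))
      = (α + (i:ℝ) + 1) * ∏ j ∈ Finset.Icc (i+2) n, (α + (j:ℝ)) := by
    rw [hins, Finset.prod_insert hnotmem]
    push_cast; ring
  have hfac : (n - i) = (n - (i+1)) + 1 := by omega
  have hfac2 : ((n - i).factorial : ℝ) = ((n:ℝ) - i) * ((n - (i+1)).factorial : ℝ) := by
    rw [hfac, Nat.factorial_succ, Nat.cast_mul, Nat.cast_add, Nat.cast_one,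
      Nat.cast_sub h1]
    push_cast; ring
  have hf1 : ((n - (i+1)).factorial : ℝ) ≠ 0 := Nat.cast_ne_zero.2 (Nat.factorial_ne_zero _)
  have hf2 : ((i).factorial : ℝ) ≠ 0 := Nat.cast_ne_zero.2 (Nat.factorial_ne_zero _)
  have hne : (n : ℝ) - i ≠ 0 := by
    have : (i : ℝ) < n := by exact_mod_cast h
    linarith
  simp only [a, hprod, hfac2, Nat.factorial_succ (i)]
  push_cast
  field_simp
  ring


lemma coeff_rec (i : ℕ) :
    ((i : ℝ) + 1) * (α + i + 1) * (P n α).coeff (i + 1) = ((i : ℝ) - n) * (P n α).coeff i := by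
  rcases lt_trichotomy i n with h | h | h
  · rw [coeffP, coeffP, if_pos (by omega : i + 1 ≤ n), if_pos (le_of_lt h)]
    exact a_rec n α h
  · subst h
    rw [coeffP, coeffP, if_neg (by omega), if_pos le_rfl]
    simp
  · rw [coeffP, coeffP, if_neg (by omega), if_neg (by omega)]
    simp

lemma ode : X * derivative (derivative (P n α)) + (C (α + 1) - X) * derivative (P n α)
    + C (n : ℝ) * (P n α) = 0 := by
  apply Polynomial.ext
  intro m
  simp only [coeff_add, coeff_zero, sub_mul, coeff_sub, coeff_C_mul]
  match m with
  | 0 =>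
    rw [Polynomial.mul_coeff_zero, Polynomial.mul_coeff_zero]
    simp only [coeff_X_zero, zero_mul, coeff_derivative]
    have := coeff_rec n α 0
    push_cast at this ⊢
    linear_combination this
  | m + 1 =>
    rw [coeff_X_mul, coeff_X_mul]
    simp only [coeff_derivative]
    have := coeff_rec n α (m + 1)
    push_cast at this ⊢
    linear_combination this


lemma a_pos (hα : -1 < α) (i : ℕ) : 0 < (∏ j ∈ Finset.Icc (i + 1) n, (α + (j : ℝ))) /
      (((n - i).factorial : ℝ) * ((i.factorial : ℝ))) := by
  apply div_pos
  · apply Finset.prod_pos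
    intro j hj
    have : 1 ≤ j := by simp [Finset.mem_Icc] at hj; omega
    have : (1:ℝ) ≤ j := by exact_mod_cast this
    linarith
  · positivity

lemma a_n_ne (hα : -1 < α) : a n α n ≠ 0 := by
  have h1 := a_pos n α hα n
  have : a n α n = (-1:ℝ)^n * ((∏ j ∈ Finset.Icc (n + 1) n, (α + (j : ℝ))) /
      (((n - n).factorial : ℝ) * ((n.factorial : ℝ)))) := by
    rw [a, mul_div_assoc]
  rw [this]
  exact mul_ne_zero (pow_ne_zero _ (by norm_num)) (ne_of_gt h1)

lemma natDegreeP (hα : -1 < α) : (P n α).natDegree = n := by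
  apply le_antisymm
  · rw [Polynomial.natDegree_le_iff_coeff_eq_zero]
    intro N hN
    rw [coeffP, if_neg (by omega)]
  · apply Polynomial.le_natDegree_of_ne_zero
    rw [coeffP, if_pos le_rfl]
    exact a_n_ne n α hα

lemma eval_pos_of_nonpos (hα : -1 < α) {y : ℝ} (hy : y ≤ 0) : 0 < laguerre n α y := by
  unfold laguerre
  apply Finset.sum_pos'
  · intro i _
    have h1 := a_pos n α hα i
    have h2 : (-1:ℝ)^i * y^i = (-y)^i := by rw [neg_pow]; ring
    calc (0:ℝ) ≤ ((∏ j ∈ Finset.Icc (i + 1) n, (α + (j : ℝ))) /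
        (((n - i).factorial : ℝ) * ((i.factorial : ℝ)))) * (-y)^i := by
          apply mul_nonneg h1.le
          apply pow_nonneg; linarith
      _ = _ := by rw [← h2]; ring
  · refine ⟨0, by simp, ?_⟩
    have h1 := a_pos n α hα 0
    simpa using h1

lemma root_pos (hα : -1 < α) {y : ℝ} (hy : laguerre n α y = 0) : 0 < y := by
  by_contra h
  push_neg at h
  have := eval_pos_of_nonpos n α hα h
  rw [hy] at this
  exact lt_irrefl 0 this


lemma deriv_prod_linear (s : Finset ℕ) (f : ℕ → ℝ) :
    derivative (∏ i ∈ s, (X - C (f i))) =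
      ∑ i ∈ s, ∏ j ∈ s.erase i, (X - C (f j)) := by
  induction s using Finset.induction_on with
  | empty => simp
  | @insert a s ha ih =>
    rw [Finset.prod_insert ha, derivative_mul, ih, Finset.sum_insert ha,
      Finset.erase_insert ha]
    simp only [derivative_sub, derivative_X, derivative_C, sub_zero, one_mul]
    rw [Finset.mul_sum]
    congr 1
    apply Finset.sum_congr rfl
    intro i hi
    rw [Finset.erase_insert_of_ne (by rintro rfl; exact ha hi), Finset.prod_insert
      (fun h => ha (Finset.mem_of_mem_erase h))]

-- factorization
lemma factorization {n : ℕ} {α : ℝ} (hn : 1 ≤ n) (hα : -1 < α)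
    (Pn : Polynomial ℝ) (hPdeg : Pn.natDegree = n) (c : ℝ) (hc : c ≠ 0)
    (hPlead : Pn.coeff n = c)
    (x : ℕ → ℝ) (hroot : ∀ i ∈ Finset.Icc 1 n, Pn.eval (x i) = 0)
    (hinj : ∀ i ∈ Finset.Icc 1 n, ∀ j ∈ Finset.Icc 1 n, x i = x j → i = j) :
    Pn = C c * ∏ i ∈ Finset.Icc 1 n, (X - C (x i)) := by
  set Q : Polynomial ℝ := C c * ∏ i ∈ Finset.Icc 1 n, (X - C (x i)) with hQ
  have hmonic : (∏ i ∈ Finset.Icc 1 n, (X - C (x i))).Monic :=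
    monic_prod_of_monic _ _ (fun i _ => monic_X_sub_C _)
  have hprod_deg : (∏ i ∈ Finset.Icc 1 n, (X - C (x i))).natDegree = n := by
    rw [Polynomial.natDegree_prod _ _ (fun i _ => X_sub_C_ne_zero (x i))]
    simp [Polynomial.natDegree_X_sub_C, Nat.card_Icc]
  have hQdeg : Q.natDegree = n := by
    rw [hQ, Polynomial.natDegree_C_mul hc, hprod_deg]
  have hQlead : Q.coeff n = c := by
    have h := hmonic.coeff_natDegree
    rw [hprod_deg] at h
    rw [hQ, Polynomial.coeff_C_mul, h, mul_one]
  set R := Pn - Q with hR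
  have hRdeg : R.natDegree ≤ n - 1 := by
    rw [Polynomial.natDegree_le_iff_coeff_eq_zero]
    intro N hN
    have hN' : n ≤ N := by omega
    rcases eq_or_lt_of_le hN' with rfl | hlt
    · simp [hR, Polynomial.coeff_sub, hPlead, hQlead]
    · rw [hR, Polynomial.coeff_sub,
        Polynomial.coeff_eq_zero_of_natDegree_lt (by omega : Pn.natDegree < N),
        Polynomial.coeff_eq_zero_of_natDegree_lt (by omega : Q.natDegree < N), sub_zero]
  have hR0 : R = 0 := by
    apply Polynomial.eq_zero_of_natDegree_lt_card_of_eval_eq_zero R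
      (f := fun i : (Finset.Icc 1 n : Finset ℕ) => x i)
    · rintro ⟨i, hi⟩ ⟨j, hj⟩ hij
      simpa using hinj i hi j hj hij
    · rintro ⟨i, hi⟩
      have h1 : Q.eval (x i) = 0 := by
        rw [hQ, eval_mul, eval_prod]
        rw [Finset.prod_eq_zero hi (by simp)]
        ring
      simp [hR, hroot i hi, h1]
    · rw [Fintype.card_coe, Nat.card_Icc]
      omega
  have := sub_eq_zero.mp hR0
  exact this


set_option maxHeartbeats 1000000 in
lemma numeric_bound (C' α t nr S2 : ℝ) (hC : 0 < C') (hα0 : 0 < α) (hn2 : 2 ≤ nr)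
    (h1' : nr ≤ C' * α) (ht0 : 0 < t)
    (hS2v : 12 * t ^ 2 * S2 = -(t - (α + 1)) ^ 2 + 4 * (t - (α + 1)) + 4 * (nr - 1) * t) :
    S2 * (3 * α) ≤ 2 * (C' + 1) * nr := by
  have hn0 : (0:ℝ) < nr := by linarith
  have h1 : 0 ≤ C' * α - nr := by linarith
  have hA : (0 : ℝ) < 8 * (C' + 1) * nr + α := by positivity
  have hβ : (0:ℝ) ≤ α + 1 := by linarith
  have m2 : 0 ≤ nr * (α * (C' * α - nr)) :=
    mul_nonneg hn0.le (mul_nonneg hα0.le h1)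
  have m3 : 0 ≤ (C' * nr) * (2 * α + 1) :=
    mul_nonneg (mul_nonneg hC.le hn0.le) (by linarith)
  have m4 : 0 ≤ nr * (α + 1) := mul_nonneg hn0.le hβ
  have m5 : 0 ≤ (α + 1) * (8 * (C' + 1) * nr + α) := mul_nonneg hβ hA.le
  have m6 : 0 ≤ C' * nr * (α + 1)^2 := by positivity
  have m7 : 0 ≤ nr * (α + 1)^2 := by positivity
  have hK : 0 ≤ (α + 1) * ((α + 1) + 4) * (8 * (C' + 1) * nr + α)
      - α * ((α + 1) + 2 * nr) ^ 2 := by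
    nlinarith [m2, m3, m4, m5, m6, m7]
  have hq : 0 ≤ (8 * (C' + 1) * nr + α) * t ^ 2
      - 2 * α * ((α + 1) + 2 * nr) * t + α * (α + 1) * ((α + 1) + 4) := by
    nlinarith [sq_nonneg ((8 * (C' + 1) * nr + α) * t - α * ((α + 1) + 2 * nr)),
      mul_nonneg hα0.le hK, hA]
  have hS2vα : 12 * t ^ 2 * S2 * α
      = (-(t - (α + 1)) ^ 2 + 4 * (t - (α + 1)) + 4 * (nr - 1) * t) * α := by
    linear_combination α * hS2v
  have h12 : 12 * t ^ 2 * S2 * α ≤ 8 * (C' + 1) * nr * t ^ 2 := by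
    nlinarith [hq, hS2vα]
  have ht2 : (0:ℝ) < t ^ 2 := by positivity
  nlinarith [h12, ht2]

theorem main (C' : ℝ) (hC : 0 < C')
    (n : ℕ) (hn : 2 ≤ n) (α : ℝ) (hα : -1 < α) (hαC : α ≥ n / C')
    (x : ℕ → ℝ)
    (hzero : ∀ i ∈ Finset.Icc 1 n, laguerre n α (x i) = 0)
    (hanti : ∀ i ∈ Finset.Icc 1 n, ∀ j ∈ Finset.Icc 1 n, i < j → x j < x i) :
    ∀ k ∈ Finset.Icc 1 (n - 1),
      x k - x (k + 1) ≥ Real.sqrt (3 / (2 * (C' + 1))) * Real.sqrt (α / n) := by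
  intro k hk
  rw [Finset.mem_Icc] at hk
  obtain ⟨hk1, hk2⟩ := hk
  have hkI : k ∈ Finset.Icc 1 n := by rw [Finset.mem_Icc]; omega
  have hk1I : k + 1 ∈ Finset.Icc 1 n := by rw [Finset.mem_Icc]; omega
  -- basic positivity
  have hα0 : 0 < α := lt_of_lt_of_le (by positivity) hαC
  have hn0 : (0:ℝ) < n := by positivity
  have hCα : (n : ℝ) ≤ C' * α := by
    rw [ge_iff_le, div_le_iff₀ hC] at hαC
    linarith
  -- distinctness
  have hinj : ∀ i ∈ Finset.Icc 1 n, ∀ j ∈ Finset.Icc 1 n, x i = x j → i = j := by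
    intro i hi j hj hij
    by_contra hne
    rcases lt_or_gt_of_ne hne with h | h
    · have := hanti i hi j hj h; linarith
    · have := hanti j hj i hi h; linarith
  -- factorization
  set c := a n α n with hc_def
  have hc : c ≠ 0 := a_n_ne n α hα
  have hroot : ∀ i ∈ Finset.Icc 1 n, (P n α).eval (x i) = 0 := by
    intro i hi; rw [evalP]; exact hzero i hi
  have hfac0 : P n α = C c * ∏ i ∈ Finset.Icc 1 n, (X - C (x i)) :=
    factorization (by omega) hα _ (natDegreeP n α hα) c hc
      (by rw [coeffP, if_pos le_rfl]) x hroot hinj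
  -- local setup
  set t := x k with ht_def
  set T := (Finset.Icc 1 n).erase k with hT_def
  set G : Polynomial ℝ := ∏ i ∈ T, (X - C (x i)) with hG_def
  have hfac : P n α = C c * ((X - C t) * G) := by
    rw [hfac0, ← Finset.mul_prod_erase _ _ hkI]
  -- distinct differences
  have htx : ∀ i ∈ T, t - x i ≠ 0 := by
    intro i hi
    rw [hT_def, Finset.mem_erase] at hi
    intro h
    have hxe : x i = x k := by
      have := sub_eq_zero.mp h
      rw [ht_def] at this
      linarith
    exact hi.1 (hinj i hi.2 k hkI hxe)
  set b : ℕ → ℝ := fun i => (t - x i)⁻¹ with hb_def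
  set S1 := ∑ i ∈ T, b i with hS1_def
  set S2 := ∑ i ∈ T, (b i)^2 with hS2_def
  -- eval of G
  have hGval : G.eval t = ∏ i ∈ T, (t - x i) := by simp [hG_def, eval_prod]
  have hGne : G.eval t ≠ 0 := by
    rw [hGval]; exact Finset.prod_ne_zero_iff.2 htx
  -- derivative formulas
  have hD1 : derivative (P n α) = Polynomial.C c * (G + (X - C t) * derivative G) := by
    rw [hfac, derivative_C_mul, derivative_mul, derivative_sub, derivative_X, derivative_C]
    ring
  have hD2 : derivative (derivative (P n α)) =
      Polynomial.C c * (Polynomial.C 2 * derivative G + (X - C t) * derivative (derivative G)) := by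
    rw [hD1, derivative_C_mul, derivative_add, derivative_mul, derivative_sub,
      derivative_X, derivative_C]
    simp only [map_ofNat]
    ring
  have hD3 : derivative (derivative (derivative (P n α))) =
      Polynomial.C c * (Polynomial.C 3 * derivative (derivative G) +
        (X - C t) * derivative (derivative (derivative G))) := by
    rw [hD2, derivative_C_mul, derivative_add, derivative_mul, derivative_mul,
      derivative_sub, derivative_X]
    simp only [derivative_C, map_ofNat, derivative_ofNat]
    ring
  have evDP : (derivative (P n α)).eval t = c * G.eval t := by
    rw [hD1]; simp
  have evD2P : (derivative (derivative (P n α))).eval t =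
      c * (2 * (derivative G).eval t) := by
    rw [hD2]; simp
  have evD3P : (derivative (derivative (derivative (P n α)))).eval t =
      c * (3 * (derivative (derivative G)).eval t) := by
    rw [hD3]; simp
  -- eval of DG
  have hDGval : (derivative G).eval t = G.eval t * S1 := by
    rw [hG_def, deriv_prod_linear]
    rw [eval_finset_sum, hS1_def, Finset.mul_sum]
    apply Finset.sum_congr rfl
    intro i hi
    rw [eval_prod]
    simp only [eval_sub, eval_X, eval_C]
    have hpe : (∏ j ∈ T.erase i, (t - x j)) * (t - x i) = ∏ j ∈ T, (t - x j) :=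
      Finset.prod_erase_mul _ _ hi
    rw [hGval, hb_def]
    field_simp [htx i hi]
    linear_combination hpe
  -- eval of D2G
  have hD2Gval : (derivative (derivative G)).eval t = G.eval t * (S1^2 - S2) := by
    rw [hG_def, deriv_prod_linear, derivative_sum]
    have hterm : ∀ i ∈ T, (derivative (∏ j ∈ T.erase i, (X - C (x j)))).eval t
        = G.eval t * (b i * (S1 - b i)) := by
      intro i hi
      rw [deriv_prod_linear, eval_finset_sum]
      simp only [eval_prod, eval_sub, eval_X, eval_C]
      have hin : ∀ j ∈ T.erase i, (∏ l ∈ (T.erase i).erase j, (t - x l))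
          = G.eval t * (b i * b j) := by
        intro j hj
        have hjT : j ∈ T := Finset.mem_of_mem_erase hj
        have h1 : (∏ l ∈ (T.erase i).erase j, (t - x l)) * (t - x j)
            = ∏ l ∈ T.erase i, (t - x l) := Finset.prod_erase_mul _ _ hj
        have h2 : (∏ l ∈ T.erase i, (t - x l)) * (t - x i)
            = ∏ l ∈ T, (t - x l) := Finset.prod_erase_mul _ _ hi
        rw [hGval, hb_def]
        field_simp [htx i hi, htx j hjT]
        linear_combination (t - x i) * h1 + h2
      have hsub : ∑ j ∈ T.erase i, b j = S1 - b i :=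
        eq_sub_of_add_eq (Finset.sum_erase_add _ _ hi)
      calc (∑ j ∈ T.erase i, ∏ l ∈ (T.erase i).erase j, (t - x l))
          = ∑ j ∈ T.erase i, G.eval t * (b i * b j) := Finset.sum_congr rfl hin
        _ = G.eval t * (b i * (S1 - b i)) := by
            rw [← Finset.mul_sum, ← Finset.mul_sum, hsub]
    rw [eval_finset_sum]
    calc (∑ i ∈ T, (derivative (∏ j ∈ T.erase i, (X - C (x j)))).eval t)
        = ∑ i ∈ T, G.eval t * (b i * (S1 - b i)) := Finset.sum_congr rfl hterm
      _ = G.eval t * (S1^2 - S2) := by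
          rw [← Finset.mul_sum]
          congr 1
          calc ∑ i ∈ T, b i * (S1 - b i)
              = (∑ i ∈ T, b i * S1) - ∑ i ∈ T, (b i)^2 := by
                rw [← Finset.sum_sub_distrib]
                apply Finset.sum_congr rfl
                intros; ring
            _ = S1^2 - S2 := by
                rw [← Finset.sum_mul, ← hS1_def, ← hS2_def]
                ring
  -- ODE evaluations
  have h0 : (P n α).eval t = 0 := hroot k hkI
  have hcg : c * G.eval t ≠ 0 := mul_ne_zero hc hGne
  have hodeEv := congrArg (Polynomial.eval t) (ode n α)
  simp only [eval_add, eval_mul, eval_sub, eval_X, eval_C, eval_zero] at hodeEv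
  rw [evDP, evD2P, h0, hDGval] at hodeEv
  have E1 : 2 * t * S1 + (α + 1 - t) = 0 := by
    have h2 : (c * G.eval t) * (2 * t * S1 + (α + 1 - t)) = 0 := by linear_combination hodeEv
    rcases mul_eq_zero.mp h2 with h | h
    · exact absurd h hcg
    · exact h
  have hode' : X * derivative (derivative (derivative (P n α))) +
      (Polynomial.C (α + 1) + 1 - X) * derivative (derivative (P n α)) +
      (Polynomial.C (n : ℝ) - 1) * derivative (P n α) = 0 := by
    have h := congrArg derivative (ode n α)
    simp only [derivative_add, derivative_mul, derivative_sub, derivative_X,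
      derivative_C, derivative_zero] at h
    linear_combination h
  have hodeEv2 := congrArg (Polynomial.eval t) hode'
  simp only [eval_add, eval_mul, eval_sub, eval_X, eval_C, eval_one, eval_zero] at hodeEv2
  rw [evDP, evD2P, evD3P, hDGval, hD2Gval] at hodeEv2
  have E2 : 3 * t * (S1 ^ 2 - S2) + 2 * (α + 2 - t) * S1 + ((n : ℝ) - 1) = 0 := by
    have h2 : (c * G.eval t) * (3 * t * (S1 ^ 2 - S2) + 2 * (α + 2 - t) * S1 + ((n : ℝ) - 1))
        = 0 := by linear_combination hodeEv2
    rcases mul_eq_zero.mp h2 with h | h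
    · exact absurd h hcg
    · exact h
  -- positivity of the zero and the gap
  have ht0 : 0 < t := root_pos n α hα (hzero k hkI)
  have hd0 : 0 < t - x (k + 1) := by
    have := hanti k hkI (k + 1) hk1I (by omega)
    rw [ht_def]
    linarith
  set d := t - x (k + 1) with hd_def
  have hk1T : k + 1 ∈ T := by
    rw [hT_def, Finset.mem_erase]
    exact ⟨by omega, hk1I⟩
  have hbS2 : (d⁻¹) ^ 2 ≤ S2 := by
    have h := Finset.single_le_sum (f := fun i => (b i) ^ 2) (fun i _ => sq_nonneg _) hk1T
    rw [hS2_def]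
    simpa [hb_def, hd_def] using h
  -- scalar identities
  have hS1v : 2 * t * S1 = t - α - 1 := by linarith
  have hS2v : 12 * t ^ 2 * S2 = -(t - (α + 1)) ^ 2 + 4 * (t - (α + 1)) + 4 * ((n : ℝ) - 1) * t := by
    linear_combination (-4 * t) * E2 + (6 * t * S1 - (t - α - 1) + 4) * hS1v
  -- numeric bound S2 ≤ 2(C'+1)n/(3α)
  have hn2 : (2 : ℝ) ≤ (n : ℝ) := by exact_mod_cast hn
  have hM : S2 * (3 * α) ≤ 2 * (C' + 1) * (n : ℝ) :=
    numeric_bound C' α t (n:ℝ) S2 hC hα0 hn2 (by linarith) ht0 hS2v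
  -- conclude
  have hd2 : 3 * α / (2 * (C' + 1) * (n : ℝ)) ≤ d ^ 2 := by
    have hd2p : 0 < d ^ 2 := by positivity
    have h2 : (d ^ 2)⁻¹ * (3 * α) ≤ 2 * (C' + 1) * (n : ℝ) := by
      rw [← inv_pow]
      exact le_trans (mul_le_mul_of_nonneg_right hbS2 (by positivity)) hM
    rw [div_le_iff₀ (by positivity)]
    have h3 : (d ^ 2)⁻¹ * (3 * α) * d ^ 2 ≤ 2 * (C' + 1) * (n : ℝ) * d ^ 2 :=
      mul_le_mul_of_nonneg_right h2 hd2p.le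
    calc 3 * α = (d ^ 2)⁻¹ * (3 * α) * d ^ 2 := by field_simp
      _ ≤ 2 * (C' + 1) * (n : ℝ) * d ^ 2 := h3
      _ = d ^ 2 * (2 * (C' + 1) * (n : ℝ)) := by ring
  rw [ge_iff_le, ← Real.sqrt_mul (by positivity)]
  have heq : 3 / (2 * (C' + 1)) * (α / (n : ℝ)) = 3 * α / (2 * (C' + 1) * (n : ℝ)) := by
    field_simp
  rw [heq]
  calc Real.sqrt (3 * α / (2 * (C' + 1) * (n : ℝ))) ≤ Real.sqrt (d ^ 2) :=
        Real.sqrt_le_sqrt hd2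
    _ = d := Real.sqrt_sq hd0.le

end LagAux

/-- Let `C > 0`, `n ≥ 2`, `α > −1` with `α ≥ n/C`, and let `x_{n,n}(α) < ⋯ < x_{n,1}(α)` be
the `n` zeros of `L_n^{(α)}` (here `x k = x_{n,k}(α)`, listed in decreasing order).  Then for
every `k ∈ {1, …, n−1}`, `x_{n,k}(α) − x_{n,k+1}(α) ≥ √(3/(2(C+1))) · √(α/n)`. -/
theorem laguerre_spacing_lower_bound_large_alpha_sharp (C : ℝ) (hC : 0 < C)
    (n : ℕ) (hn : 2 ≤ n) (α : ℝ) (hα : -1 < α) (hαC : α ≥ n / C)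
    (x : ℕ → ℝ)
    (hzero : ∀ i ∈ Finset.Icc 1 n, laguerre n α (x i) = 0)
    (hanti : ∀ i ∈ Finset.Icc 1 n, ∀ j ∈ Finset.Icc 1 n, i < j → x j < x i)
    (hall : ∀ y : ℝ, laguerre n α y = 0 → ∃ i ∈ Finset.Icc 1 n, y = x i) :
    ∀ k ∈ Finset.Icc 1 (n - 1),
      x k - x (k + 1) ≥ Real.sqrt (3 / (2 * (C + 1))) * Real.sqrt (α / n) := by
  exact LagAux.main C hC n hn α hα hαC x hzero hanti
end
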